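/- arXiv:1505.00703 — 2 statements merged into one kernel-verified Lean document; each statement's English description precedes it below -/
import Mathlib

section
/- (Tree based expansion.) Let T be a rooted tree with vertices v₁,…,v_r. For each i, let G_{v_i}^{(1)},…,G_{v_i}^{(n_i)} be Generalized Bartlett graphs (n_i ≥ 0), all vertex sets pairwise disjoint and disjoint from T. Form the graph G by taking the disjoint union of T and all the graphs G_{v_i}^{(j)}, and adding an edge from v_i to every vertex of G_{v_i}^{(j)} for every i and every 1 ≤ j ≤ n_i. Label the vertices of G by {1,…,|V(G)|} so that: the induced ordering on each G_{v_i}^{(j)} is a GB ordering of it, every vertex of every attached graph G_{v_i}^{(j)} receives a smaller label than every vertex of T, and every vertex of T receives a larger label than each of its children in T. Then this labeling is a GB ordering of G; in particular, G is a Generalized Bartlett graph. -/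
open SimpleGraph

variable {V : Type*}

/-- One step of the elimination/triangulation process: at step `k` (0-based) the vertex with
label `k` is eliminated, and all pairs of its neighbours with larger labels are joined. -/
def triStep {n : ℕ} (σ : V ≃ Fin n) (H : SimpleGraph V) (k : ℕ) : SimpleGraph V where
  Adj u v := H.Adj u v ∨
    (u ≠ v ∧ ∃ hk : k < n, k < (σ u : ℕ) ∧ k < (σ v : ℕ) ∧
      H.Adj u (σ.symm ⟨k, hk⟩) ∧ H.Adj v (σ.symm ⟨k, hk⟩))
  symm := by
    refine ⟨?_⟩
    rintro u v (h | ⟨hne, hk, h1, h2, h3, h4⟩)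
    · exact Or.inl h.symm
    · exact Or.inr ⟨hne.symm, hk, h2, h1, h4, h3⟩
  loopless := by
    refine ⟨?_⟩
    rintro u (h | ⟨hne, _⟩)
    · exact H.irrefl h
    · exact hne rfl

/-- The sequence of graphs `E_0, E_1, …` in the triangulation process. -/
def triSeq {n : ℕ} (σ : V ≃ Fin n) (G : SimpleGraph V) : ℕ → SimpleGraph V
  | 0 => G
  | k + 1 => triStep σ (triSeq σ G k) k

/-- The triangulation `D^σ(G)` of `G` under the ordering `σ` (`p − 2` elimination steps). -/
def triangulation {n : ℕ} (σ : V ≃ Fin n) (G : SimpleGraph V) : SimpleGraph V :=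
  triSeq σ G (n - 2)

/-- `σ` is a perfect elimination ordering of `G`: for every `j`, the vertex `σ⁻¹(j)` together
with its higher-labelled neighbours forms a clique. -/
def IsPerfectElimOrdering {n : ℕ} (σ : V ≃ Fin n) (G : SimpleGraph V) : Prop :=
  ∀ j : Fin n,
    G.IsClique ({σ.symm j} ∪ {v : V | (j : ℕ) < (σ v : ℕ) ∧ G.Adj v (σ.symm j)})

/-- A graph is decomposable (chordal) if it has no induced cycle of length `≥ 4`. -/
def IsDecomposable (G : SimpleGraph V) : Prop :=
  ∀ n : ℕ, 4 ≤ n → IsEmpty (SimpleGraph.cycleGraph n ↪g G)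

/-- `σ` is a Generalized Bartlett ordering of `G`: no triangle of `D^σ(G)` consists of three
non-edges of `G`. -/
def IsGBOrdering {n : ℕ} (σ : V ≃ Fin n) (G : SimpleGraph V) : Prop :=
  ¬ ∃ u v w : V,
      ¬ G.Adj u v ∧ ¬ G.Adj v w ∧ ¬ G.Adj u w ∧
      (triangulation σ G).Adj u v ∧ (triangulation σ G).Adj v w ∧
      (triangulation σ G).Adj u w

/-- `G` is a Generalized Bartlett graph: it admits a Generalized Bartlett ordering. -/
def IsGB (G : SimpleGraph V) : Prop :=
  ∃ (n : ℕ) (σ : V ≃ Fin n), IsGBOrdering σ G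

lemma adj_of_walk_support_pair {G : SimpleGraph V} {u v : V} (w : G.Walk u v) (hne : u ≠ v)
    (h : ∀ x ∈ w.support, x = u ∨ x = v) : G.Adj u v := by
  cases w with
  | nil => exact absurd rfl hne
  | cons h' p =>
    rename_i b
    rcases h b (by simp) with hb | hb
    · exact absurd (hb ▸ h') (G.irrefl)
    · exact hb ▸ h'

theorem triSeq_adj_iff [DecidableEq V] {n : ℕ} (σ : V ≃ Fin n) (G : SimpleGraph V) (m : ℕ) :
    ∀ u v : V, (triSeq σ G m).Adj u v ↔ u ≠ v ∧ ∃ w : G.Walk u v,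
      ∀ x ∈ w.support, x = u ∨ x = v ∨
        ((σ x : ℕ) < m ∧ (σ x : ℕ) < (σ u : ℕ) ∧ (σ x : ℕ) < (σ v : ℕ)) := by
  induction m with
  | zero =>
    intro u v
    constructor
    · intro h
      refine ⟨h.ne, Walk.cons (show G.Adj u v from h) Walk.nil, ?_⟩
      intro x hx
      simp only [Walk.support_cons, Walk.support_nil, List.mem_cons, List.mem_singleton] at hx
      rcases hx with rfl | rfl | h
      · exact Or.inl rfl
      · exact Or.inr (Or.inl rfl)
      · exact absurd h (by simp)
    · rintro ⟨hne, w, hw⟩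
      exact adj_of_walk_support_pair w hne (fun x hx => by
        rcases hw x hx with h | h | ⟨h, _⟩
        · exact Or.inl h
        · exact Or.inr h
        · exact absurd h (Nat.not_lt_zero _))
  | succ m ih =>
    intro u v
    show (triStep σ (triSeq σ G m) m).Adj u v ↔ _
    constructor
    · rintro (h | ⟨hne, hk, h1, h2, hadj1, hadj2⟩)
      · obtain ⟨hne, w, hw⟩ := (ih u v).1 h
        refine ⟨hne, w, fun x hx => ?_⟩
        rcases hw x hx with h | h | ⟨ha, hb, hc⟩
        · exact Or.inl h
        · exact Or.inr (Or.inl h)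
        · exact Or.inr (Or.inr ⟨Nat.lt_succ_of_lt ha, hb, hc⟩)
      · set z := σ.symm ⟨m, hk⟩ with hz
        have hσz : (σ z : ℕ) = m := by simp [hz]
        obtain ⟨hne1, w1, hw1⟩ := (ih u z).1 hadj1
        obtain ⟨hne2, w2, hw2⟩ := (ih v z).1 hadj2
        refine ⟨hne, w1.append w2.reverse, fun x hx => ?_⟩
        rw [Walk.mem_support_append_iff] at hx
        rcases hx with hx | hx
        · rcases hw1 x hx with h | h | ⟨ha, hb, hc⟩
          · exact Or.inl h
          · subst h; exact Or.inr (Or.inr ⟨by omega, by omega, by omega⟩)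
          · rw [hσz] at hc; exact Or.inr (Or.inr ⟨by omega, hb, by omega⟩)
        · rw [Walk.support_reverse, List.mem_reverse] at hx
          rcases hw2 x hx with h | h | ⟨ha, hb, hc⟩
          · exact Or.inr (Or.inl h)
          · subst h; exact Or.inr (Or.inr ⟨by omega, by omega, by omega⟩)
          · rw [hσz] at hc; exact Or.inr (Or.inr ⟨by omega, by omega, hb⟩)
    · rintro ⟨hne, w, hw⟩
      have hwp : ∀ x ∈ w.bypass.support, x = u ∨ x = v ∨
          ((σ x : ℕ) < m + 1 ∧ (σ x : ℕ) < (σ u : ℕ) ∧ (σ x : ℕ) < (σ v : ℕ)) :=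
        fun x hx => hw x (w.support_bypass_subset hx)
      set p := w.bypass with hpdef
      have hp : p.IsPath := w.bypass_isPath
      by_cases hall : ∀ x ∈ p.support, x = u ∨ x = v ∨
          ((σ x : ℕ) < m ∧ (σ x : ℕ) < (σ u : ℕ) ∧ (σ x : ℕ) < (σ v : ℕ))
      · exact Or.inl ((ih u v).2 ⟨hne, p, hall⟩)
      · push_neg at hall
        obtain ⟨x, hxs, hxu, hxv, hxc⟩ := hall
        rcases hwp x hxs with h | h | ⟨ha, hb, hc⟩
        · exact absurd h hxu
        · exact absurd h hxv
        · have hxm : (σ x : ℕ) = m := by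
            by_contra h'
            have := hxc (by omega) hb
            omega
          have hk : m < n := hxm ▸ (σ x).isLt
          have hxz : x = σ.symm ⟨m, hk⟩ := by
            rw [← Equiv.symm_apply_apply σ x]
            congr 1
            exact Fin.ext hxm
          set z := σ.symm ⟨m, hk⟩ with hzdef
          have hσz : (σ z : ℕ) = m := by simp [hzdef]
          subst hxz
          -- split p at z
          have hvz : v ≠ z := fun h => by rw [h, hσz] at hc; omega
          have huz : u ≠ z := fun h => by rw [h, hσz] at hb; omega
          have hspec := p.take_spec hxs
          have hsupp : p.support = (p.takeUntil z hxs).support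
              ++ (p.dropUntil z hxs).support.tail := by
            conv_lhs => rw [← hspec]
            rw [Walk.support_append]
          have hnodup := hp.support_nodup
          rw [hsupp, List.nodup_append] at hnodup
          obtain ⟨-, -, hdisj⟩ := hnodup
          have hvtail : v ∈ (p.dropUntil z hxs).support.tail := by
            have hv := (p.dropUntil z hxs).end_mem_support
            rw [Walk.support_eq_cons] at hv
            rcases List.mem_cons.mp hv with hv | hv
            · exact absurd hv.symm (Ne.symm hvz)
            · exact hv
          have hvnot : v ∉ (p.takeUntil z hxs).support := fun h => hdisj v h v hvtail rfl
          have hunot : u ∉ (p.dropUntil z hxs).support := by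
            intro h
            rw [Walk.support_eq_cons] at h
            rcases List.mem_cons.mp h with h | h
            · exact huz h
            · exact hdisj u (p.takeUntil z hxs).start_mem_support u h rfl
          have hadj1 : (triSeq σ G m).Adj u z := by
            refine (ih u z).2 ⟨huz, p.takeUntil z hxs, fun y hy => ?_⟩
            have hy' : y ∈ p.support := (p.support_takeUntil_subset hxs) hy
            rcases hwp y hy' with h | h | ⟨ha', hb', hc'⟩
            · exact Or.inl h
            · exact absurd (h ▸ hy) hvnot
            · by_cases hyz : y = z
              · exact Or.inr (Or.inl hyz)
              · have : (σ y : ℕ) ≠ m := fun h'' => hyz (by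
                  rw [← Equiv.symm_apply_apply σ y]; congr 1; exact Fin.ext h'')
                exact Or.inr (Or.inr ⟨by omega, hb', by omega⟩)
          have hadj2 : (triSeq σ G m).Adj v z := by
            refine (ih v z).2 ⟨hvz, (p.dropUntil z hxs).reverse, fun y hy => ?_⟩
            rw [Walk.support_reverse, List.mem_reverse] at hy
            have hy' : y ∈ p.support := (p.support_dropUntil_subset hxs) hy
            rcases hwp y hy' with h | h | ⟨ha', hb', hc'⟩
            · exact absurd (h ▸ hy) hunot
            · exact Or.inl h
            · by_cases hyz : y = z
              · exact Or.inr (Or.inl hyz)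
              · have : (σ y : ℕ) ≠ m := fun h'' => hyz (by
                  rw [← Equiv.symm_apply_apply σ y]; congr 1; exact Fin.ext h'')
                exact Or.inr (Or.inr ⟨by omega, hc', by omega⟩)
          exact Or.inr ⟨hne, hk, by omega, by omega, hadj1, hadj2⟩

theorem triangulation_adj_iff [DecidableEq V] {n : ℕ} (σ : V ≃ Fin n) (G : SimpleGraph V)
    (u v : V) : (triangulation σ G).Adj u v ↔ u ≠ v ∧ ∃ w : G.Walk u v,
      ∀ x ∈ w.support, x = u ∨ x = v ∨ ((σ x : ℕ) < (σ u : ℕ) ∧ (σ x : ℕ) < (σ v : ℕ)) := by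
  rw [show triangulation σ G = triSeq σ G (n - 2) from rfl, triSeq_adj_iff]
  constructor
  · rintro ⟨hne, w, hw⟩
    refine ⟨hne, w, fun x hx => ?_⟩
    rcases hw x hx with h | h | ⟨_, hb, hc⟩
    · exact Or.inl h
    · exact Or.inr (Or.inl h)
    · exact Or.inr (Or.inr ⟨hb, hc⟩)
  · rintro ⟨hne, w, hw⟩
    have hσne : (σ u : ℕ) ≠ (σ v : ℕ) := fun h =>
      hne (σ.injective (Fin.ext h))
    have h1 := (σ u).isLt
    have h2 := (σ v).isLt
    refine ⟨hne, w, fun x hx => ?_⟩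
    rcases hw x hx with h | h | ⟨hb, hc⟩
    · exact Or.inl h
    · exact Or.inr (Or.inl h)
    · exact Or.inr (Or.inr ⟨by omega, hb, hc⟩)
variable {V : Type*}

lemma exists_induce_walk {G : SimpleGraph V} {S : Set V} :
    ∀ {u v : V} (w : G.Walk u v) (hu : u ∈ S) (hv : v ∈ S), (∀ x ∈ w.support, x ∈ S) →
      ∃ w' : (G.induce S).Walk ⟨u, hu⟩ ⟨v, hv⟩, ∀ x ∈ w'.support, (x : V) ∈ w.support := by
  intro u v w
  induction w with
  | nil =>
    intro hu hv _
    exact ⟨Walk.nil, by simp⟩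
  | @cons a b c h' p ih =>
    intro hu hv h
    have hb : b ∈ S := h b (by simp)
    obtain ⟨w', hw'⟩ := ih hb hv (fun x hx => h x (by simp [hx, Walk.support_cons]))
    refine ⟨Walk.cons (by simpa [SimpleGraph.induce] using h') w', ?_⟩
    intro x hx
    rw [Walk.support_cons, List.mem_cons] at hx
    rcases hx with rfl | hx
    · simp [Walk.support_cons]
    · simp only [Walk.support_cons, List.mem_cons]
      exact Or.inr (hw' x hx)

lemma concat_isPath {W : Type*} {T : SimpleGraph W} {u v w : W} (p : T.Walk u v)
    (h : T.Adj v w) (hp : p.IsPath) (hw : w ∉ p.support) : (p.concat h).IsPath := by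
  rw [← Walk.isPath_reverse_iff, Walk.reverse_concat, Walk.cons_isPath_iff]
  refine ⟨hp.reverse, ?_⟩
  rw [Walk.support_reverse, List.mem_reverse]
  exact hw

lemma path_length_eq_dist {W : Type*} {T : SimpleGraph W} (hT : T.IsTree) {a b : W}
    (p : T.Walk a b) (hp : p.IsPath) : p.length = T.dist a b := by
  obtain ⟨q, hq, hql⟩ := hT.isConnected.exists_path_of_dist a b
  have heq : (⟨p, hp⟩ : T.Path a b) = ⟨q, hq⟩ :=
    SimpleGraph.isAcyclic_iff_path_unique.1 hT.IsAcyclic _ _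
  have : p = q := by simpa using congrArg Subtype.val heq
  rw [this, hql]

lemma tree_adj_dist_ne {W : Type*} [DecidableEq W] {T : SimpleGraph W} (hT : T.IsTree) (r : W)
    {x y : W} (h : T.Adj x y) : T.dist r x ≠ T.dist r y := by
  intro he
  obtain ⟨p, hp, hpl⟩ := hT.isConnected.exists_path_of_dist r x
  by_cases hy : y ∈ p.support
  · have h1 : (p.takeUntil y hy).IsPath := hp.takeUntil hy
    have h2 := path_length_eq_dist hT _ h1
    have h3 := congrArg Walk.length (p.take_spec hy)
    rw [Walk.length_append] at h3
    have h4 : (p.dropUntil y hy).length = 0 := by omega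
    exact h.ne' (Walk.eq_of_length_eq_zero h4)
  · have hcp : (p.concat h).IsPath := concat_isPath p h hp hy
    have := path_length_eq_dist hT _ hcp
    rw [Walk.length_concat] at this
    omega

lemma tree_adj_dist_cases {W : Type*} [DecidableEq W] {T : SimpleGraph W} (hT : T.IsTree) (r : W)
    {x y : W} (h : T.Adj x y) :
    T.dist r y = T.dist r x + 1 ∨ T.dist r x = T.dist r y + 1 := by
  have h1 : T.dist x y = 1 := SimpleGraph.dist_eq_one_iff_adj.2 h
  have h2 : T.dist r y ≤ T.dist r x + 1 := by
    have := hT.isConnected.dist_triangle (u := r) (v := x) (w := y)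
    omega
  have h3 : T.dist r x ≤ T.dist r y + 1 := by
    have h1' : T.dist y x = 1 := SimpleGraph.dist_eq_one_iff_adj.2 h.symm
    have := hT.isConnected.dist_triangle (u := r) (v := y) (w := x)
    omega
  have := tree_adj_dist_ne hT r h
  omega

lemma tree_parent_path {W : Type*} [DecidableEq W] {T : SimpleGraph W} (hT : T.IsTree) (r : W)
    {x c : W} (hc : T.Adj c x) (h1 : T.dist r c < T.dist r x) :
    ∃ pc : T.Walk r c, pc.IsPath ∧ (pc.concat hc).IsPath := by
  obtain ⟨pc, hp, hl⟩ := hT.isConnected.exists_path_of_dist r c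
  refine ⟨pc, hp, concat_isPath pc hc hp ?_⟩
  intro hx
  have h2 := path_length_eq_dist hT _ (hp.takeUntil hx)
  have hle := Walk.length_takeUntil_le pc hx
  omega

lemma tree_unique_parent {W : Type*} [DecidableEq W] {T : SimpleGraph W} (hT : T.IsTree) (r : W)
    {x c c' : W} (hc : T.Adj c x) (hc' : T.Adj c' x)
    (h1 : T.dist r c < T.dist r x) (h2 : T.dist r c' < T.dist r x) : c = c' := by
  obtain ⟨pc, hp, hq⟩ := tree_parent_path hT r hc h1
  obtain ⟨pc', hp', hq'⟩ := tree_parent_path hT r hc' h2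
  have heq : (⟨pc.concat hc, hq⟩ : T.Path r x) = ⟨pc'.concat hc', hq'⟩ :=
    SimpleGraph.isAcyclic_iff_path_unique.1 hT.IsAcyclic _ _
  have hqq : pc.concat hc = pc'.concat hc' := by simpa using congrArg Subtype.val heq
  have hs := congrArg (fun w : T.Walk r x => w.reverse.support) hqq
  simp only [Walk.reverse_concat, Walk.support_cons] at hs
  have hs2 : pc.reverse.support = pc'.reverse.support := by
    exact (List.cons.injEq _ _ _ _).mp hs |>.2
  rw [Walk.support_eq_cons pc.reverse, Walk.support_eq_cons pc'.reverse] at hs2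
  exact ((List.cons.injEq _ _ _ _).mp hs2).1

/-- Tree based expansion: let the vertex set `Fin N` (with its identity
labelling) be partitioned into the vertex set `TV` of a rooted tree and blocks
`blocks 0, …, blocks (m-1)` of attached graphs, each block attached by joining every one of
its vertices to its owner tree vertex.  If the induced graph on `TV` is a tree, every tree
vertex has a larger label than each of its children (neighbours farther from the root), every
block vertex has a smaller label than every tree vertex, the induced (increasing-label)
ordering on every block is a GB ordering of the induced graph on that block, and the only
edges are tree edges, within-block edges and owner–block edges, then the identity labelling is
a GB ordering of `G`; in particular `G` is a Generalized Bartlett graph. -/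
theorem isGB_tree_expansion (N : ℕ) (G : SimpleGraph (Fin N))
    (TV : Finset (Fin N)) (root : Fin N) (hroot : root ∈ TV)
    (m : ℕ) (blocks : Fin m → Finset (Fin N)) (owner : Fin m → Fin N)
    (howner : ∀ k, owner k ∈ TV)
    (hblock_tree_disj : ∀ k, ∀ v ∈ blocks k, v ∉ TV)
    (hblocks_disj : ∀ k k', k ≠ k' → ∀ v ∈ blocks k, v ∉ blocks k')
    (hcover : ∀ v : Fin N, v ∈ TV ∨ ∃ k, v ∈ blocks k)
    (htree : (G.induce (↑TV : Set (Fin N))).IsTree)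
    (hchild_label : ∀ u v : (↑TV : Set (Fin N)),
        (G.induce (↑TV : Set (Fin N))).Adj u v →
        (G.induce (↑TV : Set (Fin N))).dist ⟨root, by simpa using hroot⟩ u <
          (G.induce (↑TV : Set (Fin N))).dist ⟨root, by simpa using hroot⟩ v →
        (v : Fin N) < (u : Fin N))
    (hbelow : ∀ k, ∀ v ∈ blocks k, ∀ t ∈ TV, v < t)
    (hblocksGB : ∀ (k : Fin m) (σ : (↑(blocks k) : Set (Fin N)) ≃ Fin ((blocks k).card)),
        (∀ a b : (↑(blocks k) : Set (Fin N)), (a : Fin N) ≤ (b : Fin N) ↔ σ a ≤ σ b) →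
        IsGBOrdering σ (G.induce (↑(blocks k) : Set (Fin N))))
    (hattach : ∀ k, ∀ v ∈ blocks k, G.Adj (owner k) v)
    (hedges : ∀ u v : Fin N, G.Adj u v →
        (u ∈ TV ∧ v ∈ TV) ∨ (∃ k, u ∈ blocks k ∧ v ∈ blocks k) ∨
        (∃ k, u = owner k ∧ v ∈ blocks k) ∨ (∃ k, v = owner k ∧ u ∈ blocks k)) :
    IsGBOrdering (Equiv.refl (Fin N)) G ∧ IsGB G := by
  classical
  have hrootS : root ∈ (↑TV : Set (Fin N)) := by simpa using hroot
  have hchild : ∀ u v : (↑TV : Set (Fin N)),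
      (G.induce (↑TV : Set (Fin N))).Adj u v →
      (G.induce (↑TV : Set (Fin N))).dist ⟨root, hrootS⟩ u <
        (G.induce (↑TV : Set (Fin N))).dist ⟨root, hrootS⟩ v →
      (v : Fin N) < (u : Fin N) := hchild_label
  -- descending lemma in the tree
  have dec : ∀ (x b : (↑TV : Set (Fin N))) (p : (G.induce (↑TV : Set (Fin N))).Walk x b),
      p.IsPath → ∀ c : (↑TV : Set (Fin N)), (G.induce (↑TV : Set (Fin N))).Adj c x →
      (G.induce (↑TV : Set (Fin N))).dist ⟨root, hrootS⟩ c < (G.induce (↑TV : Set (Fin N))).dist ⟨root, hrootS⟩ x →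
      c ∉ p.support → ∀ y ∈ p.support, ((y : Fin N) : ℕ) ≤ ((x : Fin N) : ℕ) := by
    intro x b p
    induction p with
    | nil =>
      intro hp c hc hd hcn y hy
      simp only [Walk.support_nil, List.mem_singleton] at hy
      simp [hy]
    | @cons a a₁ b' h' q ih =>
      intro hp c hc hd hcn y hy
      have hdir : (G.induce (↑TV : Set (Fin N))).dist ⟨root, hrootS⟩ a <
          (G.induce (↑TV : Set (Fin N))).dist ⟨root, hrootS⟩ a₁ := by
        rcases tree_adj_dist_cases htree ⟨root, hrootS⟩ h' with h1 | h2
        · omega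
        · exfalso
          have ha₁c : a₁ = c := tree_unique_parent htree ⟨root, hrootS⟩ h'.symm hc (by omega) hd
          exact hcn (ha₁c ▸ (by simp [Walk.support_cons] : a₁ ∈ (Walk.cons h' q).support))
      have hlt : (a₁ : Fin N) < (a : Fin N) := hchild a a₁ h' hdir
      rw [Fin.lt_def] at hlt
      rw [Walk.support_cons, List.mem_cons] at hy
      rcases hy with rfl | hy
      · exact le_refl _
      · have hanot : a ∉ q.support := ((Walk.cons_isPath_iff h' q).mp hp).2
        have := ih hp.of_cons a h' hdir hanot y hy
        omega
  -- no fill edges inside the tree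
  have treeNoFill : ∀ (a b : (↑TV : Set (Fin N))), a ≠ b →
      ∀ (p : (G.induce (↑TV : Set (Fin N))).Walk a b), p.IsPath →
      (∀ y ∈ p.support, y = a ∨ y = b ∨
        (((y : Fin N) : ℕ) < ((a : Fin N) : ℕ) ∧ ((y : Fin N) : ℕ) < ((b : Fin N) : ℕ))) →
      (G.induce (↑TV : Set (Fin N))).Adj a b := by
    intro a b hab p hp hcond
    cases p with
    | nil => exact absurd rfl hab
    | @cons _ x₁ _ h' q =>
      by_cases hx₁ : x₁ = b
      · exact hx₁ ▸ h'
      · have hx₁a : x₁ ≠ a := fun h => (G.induce (↑TV : Set (Fin N))).irrefl (h ▸ h')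
        have hx₁lt : ((x₁ : Fin N) : ℕ) < ((a : Fin N) : ℕ) ∧
            ((x₁ : Fin N) : ℕ) < ((b : Fin N) : ℕ) := by
          rcases hcond x₁ (by simp [Walk.support_cons]) with h | h | h
          · exact absurd h hx₁a
          · exact absurd h hx₁
          · exact h
        have hdir : (G.induce (↑TV : Set (Fin N))).dist ⟨root, hrootS⟩ a <
            (G.induce (↑TV : Set (Fin N))).dist ⟨root, hrootS⟩ x₁ := by
          rcases tree_adj_dist_cases htree ⟨root, hrootS⟩ h' with h1 | h2
          · omega
          · exfalso
            have := hchild x₁ a h'.symm (by omega)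
            rw [Fin.lt_def] at this
            omega
        have hanot : a ∉ q.support := ((Walk.cons_isPath_iff h' q).mp hp).2
        have hble := dec x₁ b q hp.of_cons a h' hdir hanot b q.end_mem_support
        omega
  -- walks from a block vertex to a tree vertex pass through the owner
  have projQ : ∀ (k : Fin m) (x v : Fin N) (w : G.Walk x v), x ∈ blocks k → v ∈ TV →
      ∃ w₂ : G.Walk (owner k) v, w₂.length < w.length ∧ ∀ y ∈ w₂.support, y ∈ w.support := by
    intro k x v w
    induction w with
    | nil => intro hx hv; exact absurd hv (hblock_tree_disj k _ hx)
    | @cons a y c h' q ih =>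
      intro hx hv
      by_cases hyb : y ∈ blocks k
      · obtain ⟨w₂, hl, hs⟩ := ih hyb hv
        refine ⟨w₂, by rw [Walk.length_cons]; omega, fun z hz => ?_⟩
        simp only [Walk.support_cons, List.mem_cons]
        exact Or.inr (hs z hz)
      · have hyo : y = owner k := by
          rcases hedges a y h' with ⟨h1, _⟩ | ⟨k', h1, h2⟩ | ⟨k', h1, _⟩ | ⟨k', h1, h2⟩
          · exact absurd h1 (hblock_tree_disj k a hx)
          · have hkk : k' = k := by
              by_contra hne; exact (hblocks_disj k' k hne a h1) hx
            exact absurd (hkk ▸ h2) hyb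
          · exact absurd (h1 ▸ howner k') (hblock_tree_disj k a hx)
          · have hkk : k' = k := by
              by_contra hne; exact (hblocks_disj k' k hne a h2) hx
            rw [h1, hkk]
        subst hyo
        refine ⟨q, by rw [Walk.length_cons]; omega, fun z hz => ?_⟩
        simp only [Walk.support_cons, List.mem_cons]
        exact Or.inr hz
  -- projection of walks between tree vertices into the tree
  have proj : ∀ (L : ℕ) (u v : Fin N) (w : G.Walk u v), w.length ≤ L → u ∈ TV → v ∈ TV →
      ∃ w' : G.Walk u v, ∀ x ∈ w'.support, x ∈ TV ∧ x ∈ w.support := by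
    intro L
    induction L with
    | zero =>
      intro u v w hl hu hv
      cases w with
      | nil => exact ⟨Walk.nil, by simp [hu]⟩
      | cons h q => simp [Walk.length_cons] at hl
    | succ L ihL =>
      intro u v w hl hu hv
      cases w with
      | nil => exact ⟨Walk.nil, by simp [hu]⟩
      | @cons _ y _ h' q =>
        rw [Walk.length_cons] at hl
        by_cases hy : y ∈ TV
        · obtain ⟨w', hw'⟩ := ihL y v q (by omega) hy hv
          refine ⟨Walk.cons h' w', fun x hx => ?_⟩
          rw [Walk.support_cons, List.mem_cons] at hx
          rcases hx with rfl | hx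
          · exact ⟨hu, by simp [Walk.support_cons]⟩
          · refine ⟨(hw' x hx).1, ?_⟩
            simp only [Walk.support_cons, List.mem_cons]
            exact Or.inr (hw' x hx).2
        · rcases hcover y with hy' | ⟨k, hk⟩
          · exact absurd hy' hy
          · have huo : u = owner k := by
              rcases hedges u y h' with ⟨_, h2⟩ | ⟨k', h1, _⟩ | ⟨k', h1, h2⟩ | ⟨k', h1, _⟩
              · exact absurd h2 hy
              · exact absurd hu (hblock_tree_disj k' u h1)
              · have hkk : k' = k := by
                  by_contra hne; exact (hblocks_disj k' k hne y h2) hk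
                rw [h1, hkk]
              · exact absurd (h1 ▸ howner k') hy
            subst huo
            obtain ⟨w₂, hl₂, hs₂⟩ := projQ k y v q hk hv
            obtain ⟨w', hw'⟩ := ihL (owner k) v w₂ (by omega) hu hv
            refine ⟨w', fun x hx => ⟨(hw' x hx).1, ?_⟩⟩
            simp only [Walk.support_cons, List.mem_cons]
            exact Or.inr (hs₂ x (hw' x hx).2)
  -- walks avoiding the tree stay inside one block
  have stay2 : ∀ (k : Fin m) (x y : Fin N) (w : G.Walk x y), x ∈ blocks k →
      (∀ z ∈ w.support, z ∉ TV) → ∀ z ∈ w.support, z ∈ blocks k := by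
    intro k x y w
    induction w with
    | nil =>
      intro hx _ z hz
      simp only [Walk.support_nil, List.mem_singleton] at hz
      exact hz ▸ hx
    | @cons a b c h' q ih =>
      intro hx hT z hz
      have hbk : b ∈ blocks k := by
        rcases hedges a b h' with ⟨h1, _⟩ | ⟨k', h1, h2⟩ | ⟨k', h1, _⟩ | ⟨k', h1, _⟩
        · exact absurd h1 (hT a (by simp))
        · have hkk : k' = k := by
            by_contra hne; exact (hblocks_disj k' k hne a h1) hx
          exact hkk ▸ h2
        · exact absurd (h1 ▸ howner k') (hT a (by simp))
        · exact absurd (h1 ▸ howner k') (hT b (by simp [Walk.support_cons]))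
      rw [Walk.support_cons, List.mem_cons] at hz
      rcases hz with rfl | hz
      · exact hx
      · exact ih hbk (fun z' hz' => hT z' (by
          simp only [Walk.support_cons, List.mem_cons]; exact Or.inr hz')) z hz
  -- walks from a block vertex, avoiding the tree except at the end, end at the owner
  have stay : ∀ (k : Fin m) (x u' : Fin N) (w : G.Walk x u'), x ∈ blocks k → u' ∈ TV →
      (∀ z ∈ w.support, z ≠ u' → z ∉ TV) → u' = owner k := by
    intro k x u' w
    induction w with
    | nil => intro hx hu _; exact absurd hu (hblock_tree_disj k _ hx)
    | @cons a b u' h' q ih =>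
      intro hx hu hT
      by_cases hbc : b ∈ blocks k
      · exact ih hbc hu (fun z hz hne => hT z (by
          simp only [Walk.support_cons, List.mem_cons]; exact Or.inr hz) hne)
      · rcases hedges a b h' with ⟨h1, _⟩ | ⟨k', h1, h2⟩ | ⟨k', h1, _⟩ | ⟨k', h1, h2⟩
        · exact absurd h1 (hblock_tree_disj k a hx)
        · have hkk : k' = k := by
            by_contra hne; exact (hblocks_disj k' k hne a h1) hx
          exact absurd (hkk ▸ h2) hbc
        · exact absurd (h1 ▸ howner k') (hblock_tree_disj k a hx)
        · have hkk : k' = k := by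
            by_contra hne; exact (hblocks_disj k' k hne a h2) hx
          have hbTV : b ∈ TV := h1 ▸ howner k'
          by_cases hbu : b = u'
          · rw [← hbu, h1, hkk]
          · exact absurd hbTV (hT b (by simp [Walk.support_cons]) hbu)
  -- characterization of the triangulation for the identity ordering
  have charG : ∀ a b : Fin N, (triangulation (Equiv.refl (Fin N)) G).Adj a b ↔ a ≠ b ∧
      ∃ w : G.Walk a b, ∀ x ∈ w.support, x = a ∨ x = b ∨
        ((x : ℕ) < (a : ℕ) ∧ (x : ℕ) < (b : ℕ)) := by
    intro a b
    simpa using triangulation_adj_iff (Equiv.refl (Fin N)) G a b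
  -- a non-edge which is a fill edge lies within one block
  have classify : ∀ a b : Fin N, ¬G.Adj a b → (triangulation (Equiv.refl (Fin N)) G).Adj a b →
      ∃ k, a ∈ blocks k ∧ b ∈ blocks k := by
    intro a b hnadj hadj
    obtain ⟨hne, w, hw⟩ := (charG a b).1 hadj
    rcases hcover a with haT | ⟨k, hak⟩
    · rcases hcover b with hbT | ⟨k, hbk⟩
      · -- both in the tree: contradiction
        exfalso
        obtain ⟨w', hw'⟩ := proj w.length a b w le_rfl haT hbT
        obtain ⟨w'', hw''⟩ := exists_induce_walk (S := (↑TV : Set (Fin N))) w'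
          (by simpa using haT) (by simpa using hbT) (fun x hx => by simpa using (hw' x hx).1)
        have hGtadj : (G.induce (↑TV : Set (Fin N))).Adj ⟨a, by simpa using haT⟩
            ⟨b, by simpa using hbT⟩ := by
          refine treeNoFill _ _ (fun h => hne (congrArg Subtype.val h)) w''.bypass
            w''.bypass_isPath ?_
          intro y hy
          have hy2 : (y : Fin N) ∈ w.support := (hw' _ (hw'' y (w''.support_bypass_subset hy))).2
          rcases hw _ hy2 with h | h | h
          · exact Or.inl (Subtype.ext h)
          · exact Or.inr (Or.inl (Subtype.ext h))
          · exact Or.inr (Or.inr h)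
        exact hnadj (by simpa [SimpleGraph.induce] using hGtadj)
      · -- a in tree, b in block k
        exfalso
        have hmo : a = owner k := by
          refine stay k b a w.reverse hbk haT ?_
          intro z hz hzne
          rw [Walk.support_reverse, List.mem_reverse] at hz
          rcases hw z hz with h | h | h
          · exact absurd h hzne
          · intro hzT; exact hblock_tree_disj k b hbk (h ▸ hzT)
          · intro hzT
            have := hbelow k b hbk z hzT
            rw [Fin.lt_def] at this
            omega
        exact hnadj (hmo ▸ hattach k b hbk)
    · rcases hcover b with hbT | ⟨k', hbk⟩
      · -- a in block k, b in tree
        exfalso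
        have hmo : b = owner k := by
          refine stay k a b w hak hbT ?_
          intro z hz hzne
          rcases hw z hz with h | h | h
          · intro hzT; exact hblock_tree_disj k a hak (h ▸ hzT)
          · exact absurd h hzne
          · intro hzT
            have := hbelow k a hak z hzT
            rw [Fin.lt_def] at this
            omega
        exact hnadj (hmo ▸ hattach k a hak).symm
      · -- both in blocks
        have hall : ∀ z ∈ w.support, z ∉ TV := by
          intro z hz hzT
          rcases hw z hz with h | h | h
          · exact hblock_tree_disj k a hak (h ▸ hzT)
          · exact hblock_tree_disj k' b hbk (h ▸ hzT)
          · have := hbelow k a hak z hzT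
            rw [Fin.lt_def] at this
            omega
        exact ⟨k, hak, stay2 k a b w hak hall b w.end_mem_support⟩
  -- main GB ordering proof
  have hGBmain : IsGBOrdering (Equiv.refl (Fin N)) G := by
    rintro ⟨x, y, z, hxy, hyz, hxz, txy, tyz, txz⟩
    obtain ⟨k1, hx1, hy1⟩ := classify x y hxy txy
    obtain ⟨k2, hy2, hz2⟩ := classify y z hyz tyz
    obtain ⟨k3, hx3, hz3⟩ := classify x z hxz txz
    have e12 : k2 = k1 := by
      by_contra hne; exact (hblocks_disj k2 k1 hne y hy2) hy1
    have e13 : k3 = k1 := by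
      by_contra hne; exact (hblocks_disj k3 k1 hne x hx3) hx1
    rw [e12] at hy2 hz2
    rw [e13] at hx3 hz3
    -- the induced ordering on block k1
    let e := (blocks k1).orderIsoOfFin rfl
    let q : (↑(blocks k1) : Set (Fin N)) ≃ {v // v ∈ blocks k1} :=
      Equiv.subtypeEquivRight (fun v => by simp)
    let σk : (↑(blocks k1) : Set (Fin N)) ≃ Fin ((blocks k1).card) := q.trans e.symm.toEquiv
    have hmono : ∀ a b : (↑(blocks k1) : Set (Fin N)),
        (a : Fin N) ≤ (b : Fin N) ↔ σk a ≤ σk b := by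
      intro a b
      show _ ↔ e.symm (q a) ≤ e.symm (q b)
      rw [e.symm.le_iff_le]
      exact Iff.symm (Subtype.mk_le_mk)
    have hmonolt : ∀ a b : (↑(blocks k1) : Set (Fin N)),
        ((a : Fin N) : ℕ) < ((b : Fin N) : ℕ) ↔ ((σk a : ℕ) < (σk b : ℕ)) := by
      intro a b
      rw [← Fin.lt_def, ← Fin.lt_def, lt_iff_not_ge, lt_iff_not_ge, hmono b a]
    have hGBblock := hblocksGB k1 σk hmono
    -- fill edges inside the block transfer to the induced graph
    have blockFill : ∀ (a b : Fin N) (ha : a ∈ blocks k1) (hb : b ∈ blocks k1), ¬G.Adj a b →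
        (triangulation (Equiv.refl (Fin N)) G).Adj a b →
        (triangulation σk (G.induce (↑(blocks k1) : Set (Fin N)))).Adj
          ⟨a, by simpa using ha⟩ ⟨b, by simpa using hb⟩ := by
      intro a b ha hb hnadj hadj
      obtain ⟨hne, w, hw⟩ := (charG a b).1 hadj
      have hall : ∀ z' ∈ w.support, z' ∉ TV := by
        intro z' hz' hzT
        rcases hw z' hz' with h | h | h
        · exact hblock_tree_disj k1 a ha (h ▸ hzT)
        · exact hblock_tree_disj k1 b hb (h ▸ hzT)
        · have := hbelow k1 a ha z' hzT
          rw [Fin.lt_def] at this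
          omega
      have hsub := stay2 k1 a b w ha hall
      obtain ⟨w', hw'⟩ := exists_induce_walk (S := (↑(blocks k1) : Set (Fin N))) w
        (by simpa using ha) (by simpa using hb) (fun x hx => by simpa using hsub x hx)
      rw [triangulation_adj_iff]
      refine ⟨fun h => hne (congrArg Subtype.val h), w', fun x hx => ?_⟩
      rcases hw _ (hw' x hx) with h | h | h
      · exact Or.inl (Subtype.ext h)
      · exact Or.inr (Or.inl (Subtype.ext h))
      · refine Or.inr (Or.inr ⟨?_, ?_⟩)
        · exact (hmonolt x ⟨a, by simpa using ha⟩).1 h.1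
        · exact (hmonolt x ⟨b, by simpa using hb⟩).1 h.2
    -- assemble the triangle in the block
    refine hGBblock ⟨⟨x, by simpa using hx1⟩, ⟨y, by simpa using hy1⟩, ⟨z, by simpa using hz2⟩,
      ?_, ?_, ?_, ?_, ?_, ?_⟩
    · intro h; exact hxy (by simpa [SimpleGraph.induce] using h)
    · intro h; exact hyz (by simpa [SimpleGraph.induce] using h)
    · intro h; exact hxz (by simpa [SimpleGraph.induce] using h)
    · exact blockFill x y hx1 hy1 hxy txy
    · exact blockFill y z hy2 hz2 hyz tyz
    · exact blockFill x z hx3 hz3 hxz txz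
  exact ⟨hGBmain, N, Equiv.refl (Fin N), hGBmain⟩
end

section
/- (Theorem 5, part 1: Gaussian full conditionals of the independent Cholesky entries.) Let G be a graph on {1,…,p} with edge set E such that the identity ordering is a Generalized Bartlett ordering of G, let U be symmetric positive definite, and δ ∈ (0,∞)^p. Fix (i,j) ∈ E with i > j, fix all independent entries ℓ_{rs} other than ℓ_{ij} at arbitrary real values, and fix D̃ ∈ (0,∞)^p. Then there exist constants C > 0, a > 0, and b ∈ ℝ (depending on the fixed values) such that for all t ∈ ℝ, π*_{U,δ}(L_I[ℓ_{ij} := t], D(D̃)) = C · exp(−a(t − b)²); i.e., the full conditional density of ℓ_{ij} under the generalized G-Wishart distribution is univariate Gaussian. -/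
open SimpleGraph

variable {V : Type*}

open Matrix
open scoped Classical BigOperators

/-- Column `j` (as a natural number), row `i`, of the modified Cholesky factor `L(L_I, D)`. -/
noncomputable def cholCol (p : ℕ) (G : SimpleGraph (Fin p)) (ℓ : Fin p → Fin p → ℝ)
    (D : Fin p → ℝ) : ℕ → Fin p → ℝ
  | j => fun i =>
    if hj : j < p then
      if (i : ℕ) = j then 1
      else if (i : ℕ) < j then 0
      else if G.Adj i ⟨j, hj⟩ then ℓ i ⟨j, hj⟩
      else -(∑ k ∈ (Finset.range j).attach,
          cholCol p G ℓ D k.1 i * cholCol p G ℓ D k.1 ⟨j, hj⟩ *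
            D ⟨k.1, (Finset.mem_range.mp k.2).trans hj⟩) / D ⟨j, hj⟩
    else 0
termination_by j => j
decreasing_by all_goals exact Finset.mem_range.mp k.2

/-- The modified Cholesky factor `L(L_I, D)` as a matrix. -/
noncomputable def cholMat (p : ℕ) (G : SimpleGraph (Fin p)) (ℓ : Fin p → Fin p → ℝ)
    (D : Fin p → ℝ) : Matrix (Fin p) (Fin p) ℝ :=
  Matrix.of fun i j => cholCol p G ℓ D (j : ℕ) i

/-- `Ω(L_I, D) = L D Lᵀ`. -/
noncomputable def OmegaMat (p : ℕ) (G : SimpleGraph (Fin p)) (ℓ : Fin p → Fin p → ℝ)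
    (D : Fin p → ℝ) : Matrix (Fin p) (Fin p) ℝ :=
  cholMat p G ℓ D * Matrix.diagonal D * (cholMat p G ℓ D)ᵀ

/-- `ν_j = #{i : i > j, (i,j) ∈ E}`. -/
noncomputable def nuG (p : ℕ) (G : SimpleGraph (Fin p)) (j : Fin p) : ℕ :=
  (Finset.univ.filter fun i : Fin p => j < i ∧ G.Adj i j).card

/-- Recover `D` from `D̃`:  `D_k = ∏_{l ≤ k} D̃_l`. -/
noncomputable def Dof (p : ℕ) (Dt : Fin p → ℝ) (k : Fin p) : ℝ :=
  ∏ l ∈ Finset.Iic k, Dt l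

/-- Update the `(r,s)` entry of a function of two indices. -/
def updEntry (p : ℕ) (ℓ : Fin p → Fin p → ℝ) (r s : Fin p) (t : ℝ) :
    Fin p → Fin p → ℝ :=
  fun i j => if i = r ∧ j = s then t else ℓ i j

/-- The unnormalized generalized `G`-Wishart density `π*_{U,δ}`, as a function of the full
Cholesky data `(ℓ, D)`:  `(∏_j D_j^{(δ_j + 2ν_j)/2}) · exp(−tr(Ω U)/2)`. -/
noncomputable def gwDensFull (p : ℕ) (G : SimpleGraph (Fin p))
    (U : Matrix (Fin p) (Fin p) ℝ) (δ : Fin p → ℝ)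
    (ℓ : Fin p → Fin p → ℝ) (D : Fin p → ℝ) : ℝ :=
  (∏ j : Fin p, D j ^ ((δ j + 2 * (nuG p G j : ℝ)) / 2)) *
    Real.exp (-(OmegaMat p G ℓ D * U).trace / 2)


lemma cholCol_apply (p : ℕ) (G : SimpleGraph (Fin p)) (ℓ : Fin p → Fin p → ℝ)
    (D : Fin p → ℝ) (v : ℕ) (u : Fin p) :
    cholCol p G ℓ D v u =
      if hj : v < p then
        if (u : ℕ) = v then 1
        else if (u : ℕ) < v then 0
        else if G.Adj u ⟨v, hj⟩ then ℓ u ⟨v, hj⟩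
        else -(∑ k ∈ (Finset.range v).attach,
            cholCol p G ℓ D k.1 u * cholCol p G ℓ D k.1 ⟨v, hj⟩ *
              D ⟨k.1, (Finset.mem_range.mp k.2).trans hj⟩) / D ⟨v, hj⟩
      else 0 := by
  rw [cholCol]

section Aux

@[simp] lemma triStep_adj {n : ℕ} (σ : V ≃ Fin n) (H : SimpleGraph V) (k : ℕ) (u v : V) :
    (triStep σ H k).Adj u v ↔ H.Adj u v ∨
      (u ≠ v ∧ ∃ hk : k < n, k < (σ u : ℕ) ∧ k < (σ v : ℕ) ∧
        H.Adj u (σ.symm ⟨k, hk⟩) ∧ H.Adj v (σ.symm ⟨k, hk⟩)) := Iff.rfl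

lemma aux_mono {p : ℕ} (σ : Fin p ≃ Fin p) (G : SimpleGraph (Fin p)) :
    ∀ b a : ℕ, a ≤ b → ∀ {u v : Fin p},
      (triSeq σ G a).Adj u v → (triSeq σ G b).Adj u v := by
  intro b
  induction b with
  | zero =>
    intro a h1 u v h2
    have : a = 0 := by omega
    subst this; exact h2
  | succ b ih =>
    intro a h1 u v h2
    rcases Nat.lt_or_ge a (b+1) with h' | h'
    · exact Or.inl (ih a (by omega) h2)
    · have : a = b + 1 := by omega
      subst this; exact h2

lemma aux_le_tri {p : ℕ} (G : SimpleGraph (Fin p)) (u v : Fin p) (h : G.Adj u v) :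
    (triangulation (Equiv.refl (Fin p)) G).Adj u v := by
  unfold triangulation
  exact aux_mono _ G (p-2) 0 (by omega) h

lemma aux_back {p : ℕ} (G : SimpleGraph (Fin p)) {u m : Fin p} :
    ∀ N, (m:ℕ) ≤ N → (triSeq (Equiv.refl (Fin p)) G N).Adj u m →
      (triSeq (Equiv.refl (Fin p)) G (m:ℕ)).Adj u m := by
  intro N
  induction N with
  | zero =>
    intro h1 h2
    have h0 : (m:ℕ) = 0 := by omega
    rw [h0]; exact h2
  | succ N ih =>
    intro h1 h2
    rcases Nat.lt_or_ge (m:ℕ) (N+1) with h' | h'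
    · apply ih (by omega)
      have h2' := (triStep_adj (Equiv.refl (Fin p)) (triSeq (Equiv.refl (Fin p)) G N) N u m).mp h2
      rcases h2' with h3 | ⟨_, _, _, hcontra, _, _⟩
      · exact h3
      · exfalso; simp only [Equiv.refl_apply] at hcontra; omega
    · have : (m:ℕ) = N + 1 := by omega
      rw [this]; exact h2

lemma aux_closure {p : ℕ} (G : SimpleGraph (Fin p)) {u v m : Fin p}
    (h1 : (triangulation (Equiv.refl (Fin p)) G).Adj u m)
    (h2 : (triangulation (Equiv.refl (Fin p)) G).Adj v m)
    (hmv : (m:ℕ) < (v:ℕ)) (hvu : (v:ℕ) < (u:ℕ)) :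
    (triangulation (Equiv.refl (Fin p)) G).Adj u v := by
  have hup : (u:ℕ) < p := u.isLt
  unfold triangulation at h1 h2 ⊢
  have b1 := aux_back G (p-2) (by omega) h1
  have b2 := aux_back G (p-2) (by omega) h2
  have hstep : (triSeq (Equiv.refl (Fin p)) G ((m:ℕ)+1)).Adj u v := by
    refine (triStep_adj _ _ _ _ _).mpr (Or.inr ⟨Fin.ne_of_val_ne (by omega), m.isLt, ?_, ?_, ?_, ?_⟩)
    · simp only [Equiv.refl_apply]; omega
    · simp only [Equiv.refl_apply]; omega
    · simpa using b1
    · simpa using b2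
  exact aux_mono _ G (p-2) ((m:ℕ)+1) (by omega) hstep

end Aux

section Key

lemma aux_key (p : ℕ) (G : SimpleGraph (Fin p))
    (hGB : IsGBOrdering (Equiv.refl (Fin p)) G)
    (i j : Fin p) (hij : j < i) (hadj : G.Adj i j)
    (ℓ : Fin p → Fin p → ℝ) (D : Fin p → ℝ) :
    ∀ v : ℕ, ∀ u : Fin p, ∃ a b : ℝ,
      (∀ t : ℝ, cholCol p G (updEntry p ℓ i j t) D v u = a + t * b) ∧
      (b ≠ 0 → ((u = i ∧ v = (j:ℕ)) ∨ ((j:ℕ) < v ∧ ∃ hv : v < p,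
          ¬ G.Adj u ⟨v,hv⟩ ∧ (triangulation (Equiv.refl (Fin p)) G).Adj u ⟨v,hv⟩))) ∧
      ((a ≠ 0 ∨ b ≠ 0) → (u:ℕ) ≠ v → ∃ hv : v < p,
          (triangulation (Equiv.refl (Fin p)) G).Adj u ⟨v,hv⟩) := by
  have hij' : (j:ℕ) < (i:ℕ) := hij
  intro v
  induction v using Nat.strong_induction_on with
  | _ v IH =>
  intro u
  by_cases hv : v < p
  swap
  · refine ⟨0, 0, fun t => ?_, by simp, by simp⟩
    rw [cholCol_apply, dif_neg hv]; ring
  by_cases hdiag : (u:ℕ) = v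
  · refine ⟨1, 0, fun t => ?_, by simp, fun _ h => absurd hdiag h⟩
    rw [cholCol_apply, dif_pos hv, if_pos hdiag]; ring
  by_cases hlt : (u:ℕ) < v
  · refine ⟨0, 0, fun t => ?_, by simp, by simp⟩
    rw [cholCol_apply, dif_pos hv, if_neg hdiag, if_pos hlt]; ring
  by_cases hadj' : G.Adj u ⟨v, hv⟩
  · by_cases hij2 : u = i ∧ (⟨v,hv⟩ : Fin p) = j
    · refine ⟨0, 1, fun t => ?_, fun _ => Or.inl ⟨hij2.1, by rw [← hij2.2]⟩,
        fun _ _ => ⟨hv, aux_le_tri G _ _ hadj'⟩⟩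
      rw [cholCol_apply, dif_pos hv, if_neg hdiag, if_neg hlt, if_pos hadj']
      unfold updEntry
      rw [if_pos hij2]; ring
    · refine ⟨ℓ u ⟨v,hv⟩, 0, fun t => ?_, by simp,
        fun _ _ => ⟨hv, aux_le_tri G _ _ hadj'⟩⟩
      rw [cholCol_apply, dif_pos hv, if_neg hdiag, if_neg hlt, if_pos hadj']
      unfold updEntry
      rw [if_neg hij2]; ring
  -- fill-in case
  have hvu : v < (u:ℕ) := by omega
  choose A B hEq hDep hNz using IH
  have hBB : ∀ (k : ℕ) (hk : k < v), B k hk u * B k hk ⟨v,hv⟩ = 0 := by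
    intro k hk
    by_contra hne
    have hB1 : B k hk u ≠ 0 := left_ne_zero_of_mul hne
    have hB2 : B k hk ⟨v,hv⟩ ≠ 0 := right_ne_zero_of_mul hne
    rcases hDep k hk u hB1 with ⟨hui, hkj⟩ | ⟨hjk, hk2, hnadj1, htri1⟩
    · rcases hDep k hk ⟨v,hv⟩ hB2 with ⟨hvi, _⟩ | ⟨hjk2, _, _, _⟩
      · have e1 : (u:ℕ) = (i:ℕ) := by rw [hui]
        have e2 : v = (i:ℕ) := by rw [← hvi]
        omega
      · omega
    · rcases hDep k hk ⟨v,hv⟩ hB2 with ⟨hvi, hkj⟩ | ⟨hjk2, hk2', hnadj2, htri2⟩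
      · omega
      · have htri3 : (triangulation (Equiv.refl (Fin p)) G).Adj u ⟨v,hv⟩ :=
          aux_closure G htri1 htri2 (by simpa using hk) (by simpa using hvu)
        exact hGB ⟨u, ⟨k, hk2⟩, ⟨v,hv⟩, hnadj1, fun h => hnadj2 h.symm, hadj',
          htri1, htri2.symm, htri3⟩
  refine ⟨-(∑ k ∈ (Finset.range v).attach,
        A k.1 (Finset.mem_range.mp k.2) u * A k.1 (Finset.mem_range.mp k.2) ⟨v,hv⟩ *
          D ⟨k.1, (Finset.mem_range.mp k.2).trans hv⟩) / D ⟨v,hv⟩,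
      -(∑ k ∈ (Finset.range v).attach,
        (A k.1 (Finset.mem_range.mp k.2) u * B k.1 (Finset.mem_range.mp k.2) ⟨v,hv⟩ +
         B k.1 (Finset.mem_range.mp k.2) u * A k.1 (Finset.mem_range.mp k.2) ⟨v,hv⟩) *
          D ⟨k.1, (Finset.mem_range.mp k.2).trans hv⟩) / D ⟨v,hv⟩, ?_, ?_, ?_⟩
  · intro t
    rw [cholCol_apply, dif_pos hv, if_neg hdiag, if_neg hlt, if_neg hadj']
    have hterm : ∀ k ∈ (Finset.range v).attach,
        cholCol p G (updEntry p ℓ i j t) D k.1 u *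
          cholCol p G (updEntry p ℓ i j t) D k.1 ⟨v,hv⟩ *
          D ⟨k.1, (Finset.mem_range.mp k.2).trans hv⟩ =
        A k.1 (Finset.mem_range.mp k.2) u * A k.1 (Finset.mem_range.mp k.2) ⟨v,hv⟩ *
          D ⟨k.1, (Finset.mem_range.mp k.2).trans hv⟩ +
        t * ((A k.1 (Finset.mem_range.mp k.2) u * B k.1 (Finset.mem_range.mp k.2) ⟨v,hv⟩ +
              B k.1 (Finset.mem_range.mp k.2) u * A k.1 (Finset.mem_range.mp k.2) ⟨v,hv⟩) *
          D ⟨k.1, (Finset.mem_range.mp k.2).trans hv⟩) := by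
      intro k _
      rw [hEq k.1 (Finset.mem_range.mp k.2) u t, hEq k.1 (Finset.mem_range.mp k.2) ⟨v,hv⟩ t]
      linear_combination (t^2 * D ⟨k.1, (Finset.mem_range.mp k.2).trans hv⟩) *
        hBB k.1 (Finset.mem_range.mp k.2)
    rw [Finset.sum_congr rfl hterm, Finset.sum_add_distrib, ← Finset.mul_sum]
    ring
  · intro hb
    right
    have hS1 : (∑ k ∈ (Finset.range v).attach,
        (A k.1 (Finset.mem_range.mp k.2) u * B k.1 (Finset.mem_range.mp k.2) ⟨v,hv⟩ +
         B k.1 (Finset.mem_range.mp k.2) u * A k.1 (Finset.mem_range.mp k.2) ⟨v,hv⟩) *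
          D ⟨k.1, (Finset.mem_range.mp k.2).trans hv⟩) ≠ 0 := by
      intro h; apply hb; rw [h]; simp
    obtain ⟨k, hks, hkterm⟩ := Finset.exists_ne_zero_of_sum_ne_zero hS1
    have hk : k.1 < v := Finset.mem_range.mp k.2
    have hkp : k.1 < p := hk.trans hv
    have hsum_ne : A k.1 hk u * B k.1 hk ⟨v,hv⟩ + B k.1 hk u * A k.1 hk ⟨v,hv⟩ ≠ 0 :=
      left_ne_zero_of_mul hkterm
    have hmain : (j:ℕ) ≤ k.1 ∧ (triangulation (Equiv.refl (Fin p)) G).Adj u ⟨k.1,hkp⟩ ∧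
        (triangulation (Equiv.refl (Fin p)) G).Adj ⟨v,hv⟩ ⟨k.1,hkp⟩ := by
      by_cases hB1 : B k.1 hk u = 0
      · have hB2 : B k.1 hk ⟨v,hv⟩ ≠ 0 := by
          intro h; apply hsum_ne; rw [hB1, h]; ring
        have hA1 : A k.1 hk u ≠ 0 := by
          intro h; apply hsum_ne; rw [hB1, h]; ring
        obtain ⟨hkp', htri1⟩ := hNz k.1 hk u (Or.inl hA1) (by omega)
        rcases hDep k.1 hk ⟨v,hv⟩ hB2 with ⟨hvi, hkj⟩ | ⟨hjk, hkp'', _, htri2⟩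
        · refine ⟨by omega, htri1, ?_⟩
          have hkfin : (⟨k.1, hkp⟩ : Fin p) = j := Fin.ext (by simpa using hkj)
          rw [hvi, hkfin]; exact aux_le_tri G _ _ hadj
        · exact ⟨le_of_lt hjk, htri1, htri2⟩
      · have hB2 : B k.1 hk ⟨v,hv⟩ = 0 := by
          rcases mul_eq_zero.mp (hBB k.1 hk) with h | h
          · exact absurd h hB1
          · exact h
        have hA2 : A k.1 hk ⟨v,hv⟩ ≠ 0 := by
          intro h; apply hsum_ne; rw [hB2, h]; ring
        obtain ⟨hkp', htri2⟩ := hNz k.1 hk ⟨v,hv⟩ (Or.inl hA2) (by simp; omega)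
        rcases hDep k.1 hk u hB1 with ⟨hui, hkj⟩ | ⟨hjk, hkp'', _, htri1⟩
        · refine ⟨by omega, ?_, htri2⟩
          have hkfin : (⟨k.1, hkp⟩ : Fin p) = j := Fin.ext (by simpa using hkj)
          rw [hui, hkfin]; exact aux_le_tri G _ _ hadj
        · exact ⟨le_of_lt hjk, htri1, htri2⟩
    obtain ⟨hjk, htri1, htri2⟩ := hmain
    have htri3 : (triangulation (Equiv.refl (Fin p)) G).Adj u ⟨v,hv⟩ :=
      aux_closure G htri1 htri2 (by simpa using hk) (by simpa using hvu)
    exact ⟨by omega, hv, hadj', htri3⟩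
  · intro hab hne
    refine ⟨hv, ?_⟩
    rcases hab with ha | hb
    · have hS0 : (∑ k ∈ (Finset.range v).attach,
          A k.1 (Finset.mem_range.mp k.2) u * A k.1 (Finset.mem_range.mp k.2) ⟨v,hv⟩ *
            D ⟨k.1, (Finset.mem_range.mp k.2).trans hv⟩) ≠ 0 := by
        intro h; apply ha; rw [h]; simp
      obtain ⟨k, hks, hkterm⟩ := Finset.exists_ne_zero_of_sum_ne_zero hS0
      have hk : k.1 < v := Finset.mem_range.mp k.2
      have hkp : k.1 < p := hk.trans hv
      have hA1 : A k.1 hk u ≠ 0 :=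
        left_ne_zero_of_mul (left_ne_zero_of_mul hkterm)
      have hA2 : A k.1 hk ⟨v,hv⟩ ≠ 0 :=
        right_ne_zero_of_mul (left_ne_zero_of_mul hkterm)
      obtain ⟨hkp1, htri1⟩ := hNz k.1 hk u (Or.inl hA1) (by omega)
      obtain ⟨hkp2, htri2⟩ := hNz k.1 hk ⟨v,hv⟩ (Or.inl hA2) (by simp; omega)
      exact aux_closure G htri1 htri2 (by simpa using hk) (by simpa using hvu)
    · -- reuse the dependence argument
      have hS1 : (∑ k ∈ (Finset.range v).attach,
          (A k.1 (Finset.mem_range.mp k.2) u * B k.1 (Finset.mem_range.mp k.2) ⟨v,hv⟩ +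
           B k.1 (Finset.mem_range.mp k.2) u * A k.1 (Finset.mem_range.mp k.2) ⟨v,hv⟩) *
            D ⟨k.1, (Finset.mem_range.mp k.2).trans hv⟩) ≠ 0 := by
        intro h; apply hb; rw [h]; simp
      obtain ⟨k, hks, hkterm⟩ := Finset.exists_ne_zero_of_sum_ne_zero hS1
      have hk : k.1 < v := Finset.mem_range.mp k.2
      have hkp : k.1 < p := hk.trans hv
      have hsum_ne : A k.1 hk u * B k.1 hk ⟨v,hv⟩ + B k.1 hk u * A k.1 hk ⟨v,hv⟩ ≠ 0 :=
        left_ne_zero_of_mul hkterm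
      have hmain : (triangulation (Equiv.refl (Fin p)) G).Adj u ⟨k.1,hkp⟩ ∧
          (triangulation (Equiv.refl (Fin p)) G).Adj ⟨v,hv⟩ ⟨k.1,hkp⟩ := by
        by_cases hB1 : B k.1 hk u = 0
        · have hB2 : B k.1 hk ⟨v,hv⟩ ≠ 0 := by
            intro h; apply hsum_ne; rw [hB1, h]; ring
          have hA1 : A k.1 hk u ≠ 0 := by
            intro h; apply hsum_ne; rw [hB1, h]; ring
          obtain ⟨hkp', htri1⟩ := hNz k.1 hk u (Or.inl hA1) (by omega)
          rcases hDep k.1 hk ⟨v,hv⟩ hB2 with ⟨hvi, hkj⟩ | ⟨hjk, hkp'', _, htri2⟩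
          · refine ⟨htri1, ?_⟩
            have hkfin : (⟨k.1, hkp⟩ : Fin p) = j := Fin.ext (by simpa using hkj)
            rw [hvi, hkfin]; exact aux_le_tri G _ _ hadj
          · exact ⟨htri1, htri2⟩
        · have hB2 : B k.1 hk ⟨v,hv⟩ = 0 := by
            rcases mul_eq_zero.mp (hBB k.1 hk) with h | h
            · exact absurd h hB1
            · exact h
          have hA2 : A k.1 hk ⟨v,hv⟩ ≠ 0 := by
            intro h; apply hsum_ne; rw [hB2, h]; ring
          obtain ⟨hkp', htri2⟩ := hNz k.1 hk ⟨v,hv⟩ (Or.inl hA2) (by simp; omega)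
          rcases hDep k.1 hk u hB1 with ⟨hui, hkj⟩ | ⟨hjk, hkp'', _, htri1⟩
          · refine ⟨?_, htri2⟩
            have hkfin : (⟨k.1, hkp⟩ : Fin p) = j := Fin.ext (by simpa using hkj)
            rw [hui, hkfin]; exact aux_le_tri G _ _ hadj
          · exact ⟨htri1, htri2⟩
      exact aux_closure G hmain.1 hmain.2 (by simpa using hk) (by simpa using hvu)

lemma aux_trace {p : ℕ} (L U : Matrix (Fin p) (Fin p) ℝ) (D : Fin p → ℝ) :
    (L * Matrix.diagonal D * Lᵀ * U).trace =
      ∑ x : Fin p, ∑ y : Fin p, ∑ k : Fin p, L x k * D k * L y k * U y x := by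
  have h1 : ∀ x y, (L * Matrix.diagonal D * Lᵀ) x y = ∑ k, L x k * D k * L y k := by
    intro x y
    rw [Matrix.mul_apply]
    refine Finset.sum_congr rfl fun k _ => ?_
    rw [Matrix.mul_diagonal, Matrix.transpose_apply]
  have h2 : (L * Matrix.diagonal D * Lᵀ * U).trace =
      ∑ x : Fin p, ∑ y : Fin p, (L * Matrix.diagonal D * Lᵀ) x y * U y x := by
    simp [Matrix.trace, Matrix.mul_apply, Matrix.diag]
  rw [h2]
  refine Finset.sum_congr rfl fun x _ => Finset.sum_congr rfl fun y _ => ?_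
  rw [h1, Finset.sum_mul]

end Key

/-- Theorem 5, part 1: if the identity ordering is a Generalized Bartlett
ordering, `U` is positive definite and `δ > 0`, then the full conditional density of any
independent Cholesky entry `ℓ_{ij}` ((i,j) ∈ E, i > j), all other independent entries and all
of `D̃` being fixed, is a (unnormalized) univariate Gaussian:  `C · exp(−a(t−b)²)` with
`C > 0`, `a > 0`. -/
theorem gaussian_full_conditional (p : ℕ) (G : SimpleGraph (Fin p))
    (hGB : IsGBOrdering (Equiv.refl (Fin p)) G)
    (U : Matrix (Fin p) (Fin p) ℝ) (hU : U.PosDef)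
    (δ : Fin p → ℝ) (hδ : ∀ i, 0 < δ i)
    (i j : Fin p) (hij : j < i) (hadj : G.Adj i j)
    (ℓ : Fin p → Fin p → ℝ) (Dt : Fin p → ℝ) (hDt : ∀ k, 0 < Dt k) :
    ∃ C a b : ℝ, 0 < C ∧ 0 < a ∧
      ∀ t : ℝ,
        gwDensFull p G U δ (updEntry p ℓ i j t) (Dof p Dt) =
          C * Real.exp (-(a * (t - b) ^ 2)) := by
  classical
  set D := Dof p Dt with hDdef
  have hDpos : ∀ k, 0 < D k := fun k => by rw [hDdef, Dof]; exact Finset.prod_pos fun l _ => hDt l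
  have key := aux_key p G hGB i j hij hadj ℓ D
  choose MA MB hEq hDep hNz using key
  have hij' : (j:ℕ) < (i:ℕ) := hij
  -- the (i,j) entry is exactly t
  have hccj : ∀ t, cholCol p G (updEntry p ℓ i j t) D (j:ℕ) i = t := by
    intro t
    rw [cholCol_apply, dif_pos j.isLt, if_neg (by omega), if_neg (by omega),
      if_pos (by simp [hadj])]
    unfold updEntry
    rw [if_pos ⟨rfl, by simp⟩]
  have hMAj : MA (j:ℕ) i = 0 := by
    have h0 := hEq (j:ℕ) i 0
    rw [hccj 0] at h0
    linarith
  have hMBj : MB (j:ℕ) i = 1 := by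
    have h1 := hEq (j:ℕ) i 1
    rw [hccj 1] at h1
    rw [hMAj] at h1
    linarith
  have hMBj0 : ∀ u : Fin p, u ≠ i → MB (j:ℕ) u = 0 := by
    intro u hu
    by_contra hne
    rcases hDep (j:ℕ) u hne with ⟨h1, _⟩ | ⟨h2, _⟩
    · exact hu h1
    · omega
  set Am : Matrix (Fin p) (Fin p) ℝ := Matrix.of (fun x k => MA (k:ℕ) x) with hAm
  set Bm : Matrix (Fin p) (Fin p) ℝ := Matrix.of (fun x k => MB (k:ℕ) x) with hBm
  have hMat : ∀ t, cholMat p G (updEntry p ℓ i j t) D =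
      Matrix.of fun x k => Am x k + t * Bm x k := by
    intro t
    ext x k
    simp only [cholMat, Matrix.of_apply, hAm, hBm]
    exact hEq (k:ℕ) x t
  set c2 := ∑ x : Fin p, ∑ y : Fin p, ∑ k : Fin p, Bm x k * D k * Bm y k * U y x with hc2
  set c1 := ∑ x : Fin p, ∑ y : Fin p, ∑ k : Fin p,
      (Am x k * D k * Bm y k + Bm x k * D k * Am y k) * U y x with hc1
  set c0 := ∑ x : Fin p, ∑ y : Fin p, ∑ k : Fin p, Am x k * D k * Am y k * U y x with hc0
  have htrace : ∀ t, (OmegaMat p G (updEntry p ℓ i j t) D * U).trace =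
      c2 * t^2 + c1 * t + c0 := by
    intro t
    rw [OmegaMat, hMat t, aux_trace, hc2, hc1, hc0]
    rw [Finset.sum_mul, Finset.sum_mul, ← Finset.sum_add_distrib, ← Finset.sum_add_distrib]
    refine Finset.sum_congr rfl fun x _ => ?_
    rw [Finset.sum_mul, Finset.sum_mul, ← Finset.sum_add_distrib, ← Finset.sum_add_distrib]
    refine Finset.sum_congr rfl fun y _ => ?_
    rw [Finset.sum_mul, Finset.sum_mul, ← Finset.sum_add_distrib, ← Finset.sum_add_distrib]
    refine Finset.sum_congr rfl fun k _ => ?_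
    simp only [Matrix.of_apply]
    ring
  have hswap : c2 = ∑ k : Fin p, ∑ x : Fin p, ∑ y : Fin p, Bm x k * D k * Bm y k * U y x := by
    rw [hc2]
    rw [show (∑ x : Fin p, ∑ y : Fin p, ∑ k : Fin p, Bm x k * D k * Bm y k * U y x)
        = ∑ x : Fin p, ∑ k : Fin p, ∑ y : Fin p, Bm x k * D k * Bm y k * U y x from
      Finset.sum_congr rfl fun x _ => Finset.sum_comm]
    exact Finset.sum_comm
  have hge : ∀ k : Fin p, 0 ≤ ∑ x : Fin p, ∑ y : Fin p, Bm x k * D k * Bm y k * U y x := by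
    intro k
    have hps := hU.posSemidef.dotProduct_mulVec_nonneg (fun x => Bm x k)
    simp only [dotProduct, Matrix.mulVec, Pi.star_apply, star_trivial,
      Finset.mul_sum] at hps
    have h' : (∑ x : Fin p, ∑ y : Fin p, Bm x k * D k * Bm y k * U y x)
        = D k * ∑ x : Fin p, ∑ y : Fin p, Bm x k * (U x y * Bm y k) := by
      rw [Finset.mul_sum]
      rw [Finset.sum_comm]
      refine Finset.sum_congr rfl fun x _ => ?_
      rw [Finset.mul_sum]
      refine Finset.sum_congr rfl fun y _ => ?_
      ring
    rw [h']
    refine mul_nonneg (hDpos k).le ?_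
    convert hps using 2 with x
    try rw [Finset.mul_sum]
  have hBval : ∀ x : Fin p, Bm x j = if x = i then 1 else 0 := by
    intro x
    by_cases hx : x = i
    · simp [hBm, hx, hMBj]
    · simp [hBm, hx, hMBj0 x hx]
  have hjterm : (∑ x : Fin p, ∑ y : Fin p, Bm x j * D j * Bm y j * U y x) = D j * U i i := by
    simp only [hBval]
    rw [Finset.sum_eq_single i]
    · rw [Finset.sum_eq_single i]
      · simp
      · intro b _ hb; simp [hb]
      · intro h; exact absurd (Finset.mem_univ i) h
    · intro b _ hb
      simp [hb]
    · intro h; exact absurd (Finset.mem_univ i) h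
  have hUii : 0 < U i i := by
    have hne : (Pi.single i 1 : Fin p → ℝ) ≠ 0 := by
      intro h
      have := congrFun h i
      simp at this
    have := hU.dotProduct_mulVec_pos hne
    simpa [dotProduct, Matrix.mulVec, Pi.single_apply, Finset.mul_sum,
      Finset.sum_ite_eq', star] using this
  have hc2pos : 0 < c2 := by
    rw [hswap]
    calc (0:ℝ) < D j * U i i := mul_pos (hDpos j) hUii
      _ = ∑ x : Fin p, ∑ y : Fin p, Bm x j * D j * Bm y j * U y x := hjterm.symm
      _ ≤ _ := Finset.single_le_sum (fun k _ => hge k) (Finset.mem_univ j)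
  set C0 := ∏ j' : Fin p, D j' ^ ((δ j' + 2 * (nuG p G j' : ℝ)) / 2) with hC0
  have hC0pos : 0 < C0 := Finset.prod_pos fun j' _ => Real.rpow_pos_of_pos (hDpos j') _
  refine ⟨C0 * Real.exp (-(c0/2 - c1^2/(8*c2))), c2/2, -c1/(2*c2),
    mul_pos hC0pos (Real.exp_pos _), half_pos hc2pos, ?_⟩
  intro t
  unfold gwDensFull
  rw [htrace t]
  rw [mul_assoc, ← Real.exp_add]
  rw [hC0]
  congr 1
  have hc2ne : c2 ≠ 0 := ne_of_gt hc2pos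
  congr 1
  field_simp
  ring
end
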